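/- arXiv:1308.4879 — 2 statements merged into one kernel-verified Lean document; each statement's English description precedes it below -/
import Mathlib

section
/- Let β ∈ ℂ, C₀ > 0 and p ≥ 1/2 be real, and let (Z_j)_{j≥1} be complex-valued square-integrable random variables on a probability space satisfying E Z_j = β and E|Z_j − β|² ≤ C₀ for all j, and |E[(Z_j − β)·conj(Z_k − β)]| ≤ C₀·|j − k|^{−p} for all j ≠ k. Then there exists a constant C > 0 such that for every integer N ≥ 1, E| N^{−1}·Σ_{j=1}^N Z_j − β |² ≤ C · N^{−1/2}. -/
open MeasureTheory ProbabilityTheory Finset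

lemma aux_sqrt_sum (N : ℕ) : ∑ d ∈ Finset.Icc 1 N, ((d:ℝ)) ^ (-(1/2) : ℝ) ≤ 2 * Real.sqrt N := by
  induction N with
  | zero => simp
  | succ n ih =>
    rw [Finset.sum_Icc_succ_top (by omega)]
    have h1 : ((n+1 : ℕ) : ℝ) ^ (-(1/2) : ℝ) ≤ 2 * (Real.sqrt (n+1) - Real.sqrt n) := by
      have hx : ((n+1 : ℕ) : ℝ) = (n:ℝ) + 1 := by push_cast; ring
      rw [hx, Real.rpow_neg (by positivity), ← Real.sqrt_eq_rpow]
      set a := Real.sqrt ((n:ℝ)+1) with ha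
      set b := Real.sqrt (n:ℝ) with hb
      have ha2 : a^2 = (n:ℝ)+1 := Real.sq_sqrt (by positivity)
      have hb2 : b^2 = (n:ℝ) := Real.sq_sqrt (by positivity)
      have hapos : 0 < a := Real.sqrt_pos.2 (by positivity)
      have hbnn : 0 ≤ b := Real.sqrt_nonneg _
      rw [inv_le_iff_one_le_mul₀ hapos]
      nlinarith [sq_nonneg (a - b), sq_nonneg (a + b)]
    have h2 : Real.sqrt ((n+1 : ℕ):ℝ) = Real.sqrt ((n:ℝ)+1) := by push_cast; ring_nf
    push_cast at h1 h2 ⊢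
    nlinarith [h1, ih]

lemma aux_bound (N : ℕ) (s : Finset ℕ) (φ : ℕ → ℕ)
    (hinj : ∀ a ∈ s, ∀ b ∈ s, φ a = φ b → a = b)
    (hmaps : ∀ k ∈ s, φ k ∈ Finset.Icc 1 N) :
    ∑ k ∈ s, ((φ k : ℝ)) ^ (-(1/2):ℝ) ≤ 2 * Real.sqrt N := by
  classical
  calc ∑ k ∈ s, ((φ k : ℝ)) ^ (-(1/2):ℝ)
      = ∑ d ∈ s.image φ, ((d : ℝ)) ^ (-(1/2):ℝ) := by
        have h := Finset.sum_image (s := s) (g := φ)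
          (f := fun d : ℕ => ((d : ℝ)) ^ (-(1/2):ℝ)) hinj
        exact h.symm
    _ ≤ ∑ d ∈ Finset.Icc 1 N, ((d : ℝ)) ^ (-(1/2):ℝ) := by
        refine Finset.sum_le_sum_of_subset_of_nonneg ?_ (fun d _ _ => by positivity)
        intro d hd; rcases Finset.mem_image.1 hd with ⟨k, hk, rfl⟩; exact hmaps k hk
    _ ≤ 2 * Real.sqrt N := aux_sqrt_sum N

lemma aux_cross (N j : ℕ) (hj : j ∈ Finset.Icc 1 N) :
    ∑ k ∈ (Finset.Icc 1 N).erase j, |(j:ℝ) - (k:ℝ)| ^ (-(1/2):ℝ) ≤ 4 * Real.sqrt N := by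
  classical
  simp only [Finset.mem_Icc] at hj
  have hsplit : (Finset.Icc 1 N).erase j =
      ((Finset.Icc 1 N).filter (· < j)) ∪ ((Finset.Icc 1 N).filter (j < ·)) := by
    ext k; simp only [Finset.mem_erase, Finset.mem_Icc, Finset.mem_union, Finset.mem_filter]; omega
  have hdisj : Disjoint ((Finset.Icc 1 N).filter (· < j)) ((Finset.Icc 1 N).filter (j < ·)) := by
    rw [Finset.disjoint_filter]; intro k _ hk; omega
  rw [hsplit, Finset.sum_union hdisj]
  have h1 : ∑ k ∈ (Finset.Icc 1 N).filter (· < j), |(j:ℝ) - (k:ℝ)| ^ (-(1/2):ℝ)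
      ≤ 2 * Real.sqrt N := by
    have key := aux_bound N ((Finset.Icc 1 N).filter (· < j)) (fun k => j - k)
      (by intro a ha b hb h
          simp only [Finset.mem_filter, Finset.mem_Icc] at ha hb; omega)
      (by intro k hk
          simp only [Finset.mem_filter, Finset.mem_Icc] at hk
          simp only [Finset.mem_Icc]; omega)
    refine le_trans (le_of_eq (Finset.sum_congr rfl fun k hk => ?_)) key
    simp only [Finset.mem_filter, Finset.mem_Icc] at hk
    rw [Nat.cast_sub (by omega), abs_of_nonneg (sub_nonneg.2 (Nat.cast_le.2 (by omega)))]
  have h2 : ∑ k ∈ (Finset.Icc 1 N).filter (j < ·), |(j:ℝ) - (k:ℝ)| ^ (-(1/2):ℝ)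
      ≤ 2 * Real.sqrt N := by
    have key := aux_bound N ((Finset.Icc 1 N).filter (j < ·)) (fun k => k - j)
      (by intro a ha b hb h
          simp only [Finset.mem_filter, Finset.mem_Icc] at ha hb; omega)
      (by intro k hk
          simp only [Finset.mem_filter, Finset.mem_Icc] at hk
          simp only [Finset.mem_Icc]; omega)
    refine le_trans (le_of_eq (Finset.sum_congr rfl fun k hk => ?_)) key
    simp only [Finset.mem_filter, Finset.mem_Icc] at hk
    rw [abs_sub_comm, Nat.cast_sub (by omega),
      abs_of_nonneg (sub_nonneg.2 (Nat.cast_le.2 (by omega)))]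
  linarith

lemma integral_complex_re {Ω : Type*} [MeasureSpace Ω] {f : Ω → ℂ} (hf : Integrable f ℙ) :
    ∫ ω, (f ω).re ∂ℙ = (∫ ω, f ω ∂ℙ).re := by
  simpa using integral_re (𝕜 := ℂ) hf

theorem variance_of_average_decay {Ω : Type*} [MeasureSpace Ω]
    [IsProbabilityMeasure (ℙ : Measure Ω)] (β : ℂ) (C₀ p : ℝ)
    (hC₀ : 0 < C₀) (hp : 1 / 2 ≤ p) (Z : ℕ → Ω → ℂ)
    (hmem : ∀ j : ℕ, 1 ≤ j → MemLp (Z j) 2 ℙ)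
    (hmean : ∀ j : ℕ, 1 ≤ j → ∫ ω, Z j ω ∂ℙ = β)
    (hvar : ∀ j : ℕ, 1 ≤ j → ∫ ω, ‖Z j ω - β‖ ^ 2 ∂ℙ ≤ C₀)
    (hcov : ∀ j k : ℕ, 1 ≤ j → 1 ≤ k → j ≠ k →
      ‖∫ ω, (Z j ω - β) * star (Z k ω - β) ∂ℙ‖ ≤ C₀ * |(j : ℝ) - (k : ℝ)| ^ (-p)) :
    ∃ C > 0, ∀ N : ℕ, 1 ≤ N →
      ∫ ω, ‖(N : ℂ)⁻¹ * (∑ j ∈ Finset.Icc 1 N, Z j ω) - β‖ ^ 2 ∂ℙ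
        ≤ C * (N : ℝ) ^ (-(1 / 2) : ℝ) := by
  classical
  refine ⟨5 * C₀, by positivity, ?_⟩
  intro N hN
  have hN0 : (0:ℝ) < N := by exact_mod_cast hN
  set W : ℕ → Ω → ℂ := fun j ω => Z j ω - β with hWdef
  have hWmem : ∀ j ∈ Finset.Icc 1 N, MemLp (W j) 2 ℙ := fun j hj =>
    ((hmem j (Finset.mem_Icc.1 hj).1).sub (memLp_const β))
  have hWint : ∀ j ∈ Finset.Icc 1 N, ∀ k ∈ Finset.Icc 1 N,
      Integrable (fun ω => W j ω * star (W k ω)) ℙ := by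
    intro j hj k hk
    have hstar : MemLp (fun ω => star (W k ω)) 2 ℙ := by
      refine MemLp.of_le_mul (c := 1) (hWmem k hk)
        (continuous_star.comp_aestronglyMeasurable (hWmem k hk).1) ?_
      filter_upwards with ω; simp
    have h2 : MemLp ((W j) • (fun ω => star (W k ω))) 1 ℙ :=
      hstar.smul (hWmem j hj) (hpqr := ⟨by rw [ENNReal.inv_two_add_inv_two, inv_one]⟩)
    have := memLp_one_iff_integrable.1 h2
    simpa [Pi.smul_apply, smul_eq_mul, Pi.mul_def] using this
  have hpt : ∀ ω, ‖(N : ℂ)⁻¹ * (∑ j ∈ Finset.Icc 1 N, Z j ω) - β‖ ^ 2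
      = ((N:ℝ)⁻¹)^2 * ∑ j ∈ Finset.Icc 1 N, ∑ k ∈ Finset.Icc 1 N,
          (W j ω * star (W k ω)).re := by
    intro ω
    have e1 : (N : ℂ)⁻¹ * (∑ j ∈ Finset.Icc 1 N, Z j ω) - β
        = (N : ℂ)⁻¹ * ∑ j ∈ Finset.Icc 1 N, W j ω := by
      have hNc : ((N:ℂ)) ≠ 0 := by exact_mod_cast hN0.ne'
      have : ∑ j ∈ Finset.Icc 1 N, W j ω
          = (∑ j ∈ Finset.Icc 1 N, Z j ω) - (N:ℂ) * β := by
        simp [hWdef, Finset.sum_sub_distrib, Nat.card_Icc, mul_comm]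
      rw [this, mul_sub, ← mul_assoc, inv_mul_cancel₀ hNc, one_mul]
    rw [e1, norm_mul, mul_pow, norm_inv, Complex.norm_natCast]
    congr 1
    set S := ∑ j ∈ Finset.Icc 1 N, W j ω with hS
    have key : ‖S‖^2 = (S * star S).re := by
      rw [Complex.star_def, Complex.mul_conj]
      simp [Complex.normSq_eq_norm_sq, ← Complex.ofReal_pow]
    rw [key, hS, star_sum, Finset.sum_mul_sum, Complex.re_sum]
    exact Finset.sum_congr rfl fun j _ => Complex.re_sum _ _
  have hintre : ∀ j ∈ Finset.Icc 1 N, ∀ k ∈ Finset.Icc 1 N,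
      Integrable (fun ω => (W j ω * star (W k ω)).re) ℙ := by
    intro j hj k hk
    simpa using (hWint j hj k hk).re
  have e2 : ∫ ω, ‖(N : ℂ)⁻¹ * (∑ j ∈ Finset.Icc 1 N, Z j ω) - β‖ ^ 2 ∂ℙ
      = ((N:ℝ)⁻¹)^2 * ∑ j ∈ Finset.Icc 1 N, ∑ k ∈ Finset.Icc 1 N,
          (∫ ω, W j ω * star (W k ω) ∂ℙ).re := by
    simp_rw [hpt]
    rw [integral_const_mul]
    congr 1
    rw [integral_finset_sum _ (fun j hj => integrable_finset_sum _ (fun k hk => hintre j hj k hk))]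
    refine Finset.sum_congr rfl fun j hj => ?_
    rw [integral_finset_sum _ (fun k hk => hintre j hj k hk)]
    exact Finset.sum_congr rfl fun k hk => integral_complex_re (hWint j hj k hk)
  have sqN1 : 1 ≤ Real.sqrt N := Real.one_le_sqrt.2 (by exact_mod_cast hN)
  have e3 : ∑ j ∈ Finset.Icc 1 N, ∑ k ∈ Finset.Icc 1 N,
      (∫ ω, W j ω * star (W k ω) ∂ℙ).re ≤ (N:ℝ) * (C₀ + C₀ * (4 * Real.sqrt N)) := by
    have hterm : ∀ j ∈ Finset.Icc 1 N,
        ∑ k ∈ Finset.Icc 1 N, (∫ ω, W j ω * star (W k ω) ∂ℙ).re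
          ≤ C₀ + C₀ * (4 * Real.sqrt N) := by
      intro j hj
      rw [← Finset.add_sum_erase _ _ hj]
      have hdiag : (∫ ω, W j ω * star (W j ω) ∂ℙ).re ≤ C₀ := by
        refine (Complex.re_le_norm _).trans ?_
        have heq : (fun ω => W j ω * star (W j ω)) = fun ω => ((‖W j ω‖^2 : ℝ) : ℂ) := by
          funext ω
          rw [Complex.star_def, Complex.mul_conj]
          norm_cast
          simp [Complex.normSq_eq_norm_sq]
        have hcast : ∫ ω, ((‖W j ω‖^2 : ℝ) : ℂ) ∂ℙ = (((∫ ω, ‖W j ω‖^2 ∂ℙ) : ℝ) : ℂ) := by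
          exact integral_ofReal (𝕜 := ℂ) (f := fun ω => ‖W j ω‖^2) (μ := ℙ)
        rw [heq, hcast, Complex.norm_real, Real.norm_eq_abs,
          abs_of_nonneg (integral_nonneg fun ω => by positivity)]
        exact hvar j (Finset.mem_Icc.1 hj).1
      have hoff : ∑ k ∈ (Finset.Icc 1 N).erase j, (∫ ω, W j ω * star (W k ω) ∂ℙ).re
          ≤ C₀ * (4 * Real.sqrt N) := by
        have step : ∀ k ∈ (Finset.Icc 1 N).erase j,
            (∫ ω, W j ω * star (W k ω) ∂ℙ).re ≤ C₀ * |(j:ℝ) - (k:ℝ)| ^ (-(1/2) : ℝ) := by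
          intro k hk
          obtain ⟨hkj, hkI⟩ := Finset.mem_erase.1 hk
          have hk1 := (Finset.mem_Icc.1 hkI).1
          have hj1 := (Finset.mem_Icc.1 hj).1
          refine (Complex.re_le_norm _).trans ?_
          have hjk : j ≠ k := fun h => hkj h.symm
          refine le_trans (hcov j k hj1 hk1 hjk) ?_
          have habs : (1:ℝ) ≤ |(j:ℝ) - (k:ℝ)| := by
            rcases lt_or_gt_of_ne hjk with h | h
            · rw [abs_sub_comm, le_abs]; left
              have : (j:ℝ) + 1 ≤ k := by exact_mod_cast h
              linarith
            · rw [le_abs]; left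
              have : (k:ℝ) + 1 ≤ j := by exact_mod_cast h
              linarith
          exact mul_le_mul_of_nonneg_left
            (Real.rpow_le_rpow_of_exponent_le habs (by linarith)) hC₀.le
        refine le_trans (Finset.sum_le_sum step) ?_
        rw [← Finset.mul_sum]
        exact mul_le_mul_of_nonneg_left (aux_cross N j hj) hC₀.le
      linarith
    calc ∑ j ∈ Finset.Icc 1 N, ∑ k ∈ Finset.Icc 1 N, (∫ ω, W j ω * star (W k ω) ∂ℙ).re
        ≤ ∑ j ∈ Finset.Icc 1 N, (C₀ + C₀ * (4 * Real.sqrt N)) := Finset.sum_le_sum hterm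
      _ = (N:ℝ) * (C₀ + C₀ * (4 * Real.sqrt N)) := by
          rw [Finset.sum_const, Nat.card_Icc]; push_cast; ring
  have harith : ((N:ℝ)⁻¹)^2 * ((N:ℝ) * (C₀ + C₀ * (4 * Real.sqrt N)))
      ≤ 5 * C₀ * (N:ℝ) ^ (-(1/2) : ℝ) := by
    have hs : Real.sqrt N * Real.sqrt N = (N:ℝ) := Real.mul_self_sqrt hN0.le
    have hspos : 0 < Real.sqrt N := by linarith
    rw [Real.rpow_neg hN0.le, ← Real.sqrt_eq_rpow]
    have key1 : ((N:ℝ)⁻¹)^2 * ((N:ℝ) * (C₀ + C₀ * (4 * Real.sqrt N)))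
        = (C₀ + 4 * C₀ * Real.sqrt N) / (N:ℝ) := by
      field_simp
    have key2 : 5 * C₀ * (Real.sqrt N)⁻¹ = (5 * C₀ * Real.sqrt N) / (N:ℝ) := by
      rw [mul_div_assoc]
      congr 1
      rw [inv_eq_one_div, div_eq_div_iff hspos.ne' hN0.ne', one_mul, hs]
    rw [key1, key2, div_le_div_iff₀ hN0 hN0]
    nlinarith [mul_nonneg (mul_nonneg hC₀.le (sub_nonneg.2 sqN1)) hN0.le]
  calc ∫ ω, ‖(N : ℂ)⁻¹ * (∑ j ∈ Finset.Icc 1 N, Z j ω) - β‖ ^ 2 ∂ℙ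
      = ((N:ℝ)⁻¹)^2 * ∑ j ∈ Finset.Icc 1 N, ∑ k ∈ Finset.Icc 1 N,
          (∫ ω, W j ω * star (W k ω) ∂ℙ).re := e2
    _ ≤ ((N:ℝ)⁻¹)^2 * ((N:ℝ) * (C₀ + C₀ * (4 * Real.sqrt N))) := by
        exact mul_le_mul_of_nonneg_left e3 (by positivity)
    _ ≤ 5 * C₀ * (N:ℝ) ^ (-(1/2) : ℝ) := harith
end

section
/- Let β ∈ ℂ, C₀ > 0 and p ≥ 1/2 be real, and let (Z_j)_{j≥1} be complex-valued square-integrable random variables on a probability space satisfying E Z_j = β and E|Z_j − β|² ≤ C₀ for all j, and |E[(Z_j − β)·conj(Z_k − β)]| ≤ C₀·|j − k|^{−p} for all j ≠ k. Then the averages along cubes converge almost surely: lim_{N→∞} N^{−3}·Σ_{j=1}^{N³} Z_j = β almost surely. -/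
open MeasureTheory ProbabilityTheory Filter
open scoped ENNReal NNReal

lemma sqrt_sum_le' (N : ℕ) :
    ∑ d ∈ Finset.Icc 1 N, ((d : ℝ)) ^ (-(1/2) : ℝ) ≤ 2 * Real.sqrt N := by
  have key : ∀ i : ℕ, ((1 + i : ℕ) : ℝ) ^ (-(1/2) : ℝ)
      ≤ 2 * Real.sqrt ((i+1 : ℕ)) - 2 * Real.sqrt i := by
    intro i
    have ha : Real.sqrt i ^ 2 = i := Real.sq_sqrt (by positivity)
    have hb : Real.sqrt ((i:ℝ)+1) ^ 2 = (i+1 : ℝ) := Real.sq_sqrt (by positivity)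
    have hbpos : 0 < Real.sqrt ((i:ℝ)+1) := Real.sqrt_pos.2 (by positivity)
    have hanneg : 0 ≤ Real.sqrt i := Real.sqrt_nonneg _
    have hcast : ((1 + i : ℕ) : ℝ) = (i : ℝ) + 1 := by push_cast; ring
    have hcast2 : (((i+1 : ℕ)) : ℝ) = (i : ℝ) + 1 := by push_cast; ring
    rw [hcast, hcast2, Real.rpow_neg (by positivity), ← Real.sqrt_eq_rpow]
    rw [inv_le_iff_one_le_mul₀ (by positivity)]
    nlinarith [sq_nonneg (Real.sqrt ((i:ℝ)+1) - Real.sqrt i)]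
  calc ∑ d ∈ Finset.Icc 1 N, ((d : ℝ)) ^ (-(1/2) : ℝ)
      = ∑ i ∈ Finset.range N, ((1 + i : ℕ) : ℝ) ^ (-(1/2) : ℝ) := by
        rw [← Finset.Ico_add_one_right_eq_Icc, Finset.sum_Ico_eq_sum_range]; simp
    _ ≤ ∑ i ∈ Finset.range N, ((fun n : ℕ => 2 * Real.sqrt n) (i+1)
          - (fun n : ℕ => 2 * Real.sqrt n) i) :=
        Finset.sum_le_sum (fun i _ => key i)
    _ = 2 * Real.sqrt N - 2 * Real.sqrt 0 := by
        rw [Finset.sum_range_sub (fun n : ℕ => 2 * Real.sqrt (n:ℝ))]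
        norm_num
    _ ≤ 2 * Real.sqrt N := by simp

lemma sum_comp_le' {s t : Finset ℕ} (f : ℕ → ℝ) (hf : ∀ d, 0 ≤ f d) (e : ℕ → ℕ)
    (he : ∀ x ∈ s, ∀ y ∈ s, e x = e y → x = y) (him : ∀ x ∈ s, e x ∈ t) :
    ∑ k ∈ s, f (e k) ≤ ∑ d ∈ t, f d := by
  rw [← Finset.sum_image he]
  refine Finset.sum_le_sum_of_subset_of_nonneg ?_ (fun i _ _ => hf i)
  intro d hd
  obtain ⟨x, hx, rfl⟩ := Finset.mem_image.1 hd
  exact him x hx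

lemma row_sum_le' (N j : ℕ) (hj1 : 1 ≤ j) (hjN : j ≤ N) :
    ∑ k ∈ (Finset.Icc 1 N).erase j, |(j:ℝ) - (k:ℝ)| ^ (-(1/2):ℝ) ≤ 4 * Real.sqrt N := by
  have hsq := sqrt_sum_le' N
  set E := (Finset.Icc 1 N).erase j with hE
  have hsplit := Finset.sum_filter_add_sum_filter_not E (fun k => k < j)
    (fun k => |(j:ℝ) - (k:ℝ)| ^ (-(1/2):ℝ))
  have hA : ∑ k ∈ E.filter (fun k => k < j), |(j:ℝ) - (k:ℝ)| ^ (-(1/2):ℝ)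
      ≤ ∑ d ∈ Finset.Icc 1 N, ((d : ℝ)) ^ (-(1/2) : ℝ) := by
    have : ∀ k ∈ E.filter (fun k => k < j),
        |(j:ℝ) - (k:ℝ)| ^ (-(1/2):ℝ) = (((j - k : ℕ)) : ℝ) ^ (-(1/2):ℝ) := by
      intro k hk
      have hk' : k < j := (Finset.mem_filter.1 hk).2
      rw [Nat.cast_sub hk'.le, abs_of_nonneg (by
        have : (k:ℝ) < j := by exact_mod_cast hk'
        linarith)]
    rw [Finset.sum_congr rfl this]
    refine sum_comp_le' _ (fun d => Real.rpow_nonneg (Nat.cast_nonneg d) _) _ ?_ ?_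
    · intro x hx y hy hxy
      have hx' : x < j := (Finset.mem_filter.1 hx).2
      have hy' : y < j := (Finset.mem_filter.1 hy).2
      omega
    · intro x hx
      have hx' : x < j := (Finset.mem_filter.1 hx).2
      have hx'' : 1 ≤ x := (Finset.mem_Icc.1 (Finset.mem_of_mem_erase (Finset.mem_filter.1 hx).1)).1
      refine Finset.mem_Icc.2 ⟨by omega, by omega⟩
  have hB : ∑ k ∈ E.filter (fun k => ¬ k < j), |(j:ℝ) - (k:ℝ)| ^ (-(1/2):ℝ)
      ≤ ∑ d ∈ Finset.Icc 1 N, ((d : ℝ)) ^ (-(1/2) : ℝ) := by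
    have : ∀ k ∈ E.filter (fun k => ¬ k < j),
        |(j:ℝ) - (k:ℝ)| ^ (-(1/2):ℝ) = (((k - j : ℕ)) : ℝ) ^ (-(1/2):ℝ) := by
      intro k hk
      have hk1 := Finset.mem_filter.1 hk
      have hkj : j < k := by
        have := Finset.ne_of_mem_erase hk1.1
        omega
      rw [Nat.cast_sub hkj.le, abs_sub_comm, abs_of_nonneg (by
        have : (j:ℝ) < k := by exact_mod_cast hkj
        linarith)]
    rw [Finset.sum_congr rfl this]
    refine sum_comp_le' _ (fun d => Real.rpow_nonneg (Nat.cast_nonneg d) _) _ ?_ ?_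
    · intro x hx y hy hxy
      have hx' : ¬ x < j := (Finset.mem_filter.1 hx).2
      have hy' : ¬ y < j := (Finset.mem_filter.1 hy).2
      omega
    · intro x hx
      have h1 := Finset.mem_filter.1 hx
      have hxj : j < x := by have := Finset.ne_of_mem_erase h1.1; omega
      have hxN : x ≤ N := (Finset.mem_Icc.1 (Finset.mem_of_mem_erase h1.1)).2
      refine Finset.mem_Icc.2 ⟨by omega, by omega⟩
  linarith

lemma mul_star_integrable' {Ω : Type*} [MeasureSpace Ω] [IsProbabilityMeasure (ℙ : Measure Ω)]
    (f g : Ω → ℂ) (hf : MemLp f 2 ℙ) (hg : MemLp g 2 ℙ) :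
    Integrable (fun ω => f ω * star (g ω)) (ℙ : Measure Ω) := by
  have hgs : MemLp (fun ω => star (g ω)) 2 (ℙ : Measure Ω) := by
    refine ⟨(Complex.continuous_conj.comp_aestronglyMeasurable hg.1 : _), ?_⟩
    have : eLpNorm (fun ω => star (g ω)) 2 (ℙ : Measure Ω) = eLpNorm g 2 ℙ := by
      apply eLpNorm_congr_norm_ae
      filter_upwards with ω using by simp
    rw [this]; exact hg.2
  have h2 := hgs.smul (φ := f) hf (p := 2) (q := 2) (r := 1)
    (hpqr := ⟨by rw [ENNReal.inv_two_add_inv_two, inv_one]⟩)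
  rw [memLp_one_iff_integrable] at h2
  exact h2

lemma variance_sum_le' {Ω : Type*} [MeasureSpace Ω] [IsProbabilityMeasure (ℙ : Measure Ω)]
    (N : ℕ) (C₀ : ℝ) (hC₀ : 0 ≤ C₀) (W : ℕ → Ω → ℂ) (hW : ∀ j, 1 ≤ j → MemLp (W j) 2 ℙ)
    (hdiag : ∀ j, 1 ≤ j → ‖∫ ω, W j ω * star (W j ω) ∂ℙ‖ ≤ C₀)
    (hoff : ∀ j k, 1 ≤ j → 1 ≤ k → j ≠ k →
      ‖∫ ω, W j ω * star (W k ω) ∂ℙ‖ ≤ C₀ * |(j:ℝ)-(k:ℝ)| ^ (-(1/2):ℝ)) :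
    ∫ ω, ‖∑ j ∈ Finset.Icc 1 N, W j ω‖^2 ∂ℙ ≤ C₀ * N + 4 * C₀ * N * Real.sqrt N := by
  set A := Finset.Icc 1 N with hA
  have hmemA : ∀ j ∈ A, MemLp (W j) 2 (ℙ : Measure Ω) :=
    fun j hj => hW j (Finset.mem_Icc.1 hj).1
  set S : Ω → ℂ := fun ω => ∑ j ∈ A, W j ω with hS
  have hmemS : MemLp S 2 (ℙ : Measure Ω) := by
    have h := memLp_finset_sum' A hmemA
    have he : (∑ i ∈ A, W i) = S := by
      funext ω; simp [hS, Finset.sum_apply]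
    rwa [he] at h
  have hint : ∀ j ∈ A, ∀ k ∈ A, Integrable (fun ω => W j ω * star (W k ω)) (ℙ : Measure Ω) :=
    fun j hj k hk => mul_star_integrable' _ _ (hmemA j hj) (hmemA k hk)
  have hintS : Integrable (fun ω => S ω * star (S ω)) (ℙ : Measure Ω) :=
    mul_star_integrable' _ _ hmemS hmemS
  have step1 : ∫ ω, ‖S ω‖^2 ∂ℙ = (∫ ω, S ω * star (S ω) ∂ℙ).re := by
    have h1 : ∀ ω, ‖S ω‖^2 = (S ω * star (S ω)).re := by
      intro ω
      rw [show (star (S ω)) = (starRingEnd ℂ) (S ω) from rfl, Complex.mul_conj',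
        ← Complex.ofReal_pow, Complex.ofReal_re]
    simp_rw [h1]
    rw [← RCLike.re_to_complex]
    exact integral_re hintS
  have step2 : ∫ ω, S ω * star (S ω) ∂ℙ
      = ∑ j ∈ A, ∑ k ∈ A, ∫ ω, W j ω * star (W k ω) ∂ℙ := by
    have expand : ∀ ω, S ω * star (S ω) = ∑ j ∈ A, ∑ k ∈ A, W j ω * star (W k ω) := by
      intro ω
      rw [hS]; rw [star_sum, Finset.sum_mul_sum]
    simp_rw [expand]
    rw [integral_finset_sum A (fun j hj => integrable_finset_sum A (fun k hk => hint j hj k hk))]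
    exact Finset.sum_congr rfl fun j hj =>
      integral_finset_sum A (fun k hk => hint j hj k hk)
  have step4 : ∀ j ∈ A, ∑ k ∈ A, ‖∫ ω, W j ω * star (W k ω) ∂ℙ‖
      ≤ C₀ + 4 * C₀ * Real.sqrt N := by
    intro j hj
    obtain ⟨hj1, hjN⟩ := Finset.mem_Icc.1 hj
    rw [← Finset.add_sum_erase A _ hj]
    have h1 : ∑ k ∈ A.erase j, ‖∫ ω, W j ω * star (W k ω) ∂ℙ‖
        ≤ ∑ k ∈ A.erase j, C₀ * |(j:ℝ) - (k:ℝ)| ^ (-(1/2):ℝ) := by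
      apply Finset.sum_le_sum
      intro k hk
      have hkA := Finset.mem_of_mem_erase hk
      exact hoff j k hj1 (Finset.mem_Icc.1 hkA).1 (Finset.ne_of_mem_erase hk).symm
    have h2 : ∑ k ∈ A.erase j, C₀ * |(j:ℝ) - (k:ℝ)| ^ (-(1/2):ℝ)
        ≤ C₀ * (4 * Real.sqrt N) := by
      rw [← Finset.mul_sum]
      exact mul_le_mul_of_nonneg_left (row_sum_le' N j hj1 hjN) hC₀
    have h3 := hdiag j hj1
    calc ‖∫ ω, W j ω * star (W j ω) ∂ℙ‖ + ∑ k ∈ A.erase j, ‖∫ ω, W j ω * star (W k ω) ∂ℙ‖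
        ≤ C₀ + C₀ * (4 * Real.sqrt N) := add_le_add h3 (h1.trans h2)
      _ = C₀ + 4 * C₀ * Real.sqrt N := by ring
  rw [step1, step2]
  calc (∑ j ∈ A, ∑ k ∈ A, ∫ ω, W j ω * star (W k ω) ∂ℙ).re
      ≤ ‖∑ j ∈ A, ∑ k ∈ A, ∫ ω, W j ω * star (W k ω) ∂ℙ‖ := Complex.re_le_norm _
    _ ≤ ∑ j ∈ A, ‖∑ k ∈ A, ∫ ω, W j ω * star (W k ω) ∂ℙ‖ := norm_sum_le _ _
    _ ≤ ∑ j ∈ A, ∑ k ∈ A, ‖∫ ω, W j ω * star (W k ω) ∂ℙ‖ :=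
        Finset.sum_le_sum fun j _ => norm_sum_le _ _
    _ ≤ ∑ j ∈ A, (C₀ + 4 * C₀ * Real.sqrt N) := Finset.sum_le_sum step4
    _ = N * (C₀ + 4 * C₀ * Real.sqrt N) := by
        rw [Finset.sum_const, hA, Nat.card_Icc]
        simp only [Nat.add_sub_cancel, nsmul_eq_mul]
    _ = C₀ * N + 4 * C₀ * N * Real.sqrt N := by ring

theorem ae_tendsto_averages_along_cubes {Ω : Type*} [MeasureSpace Ω]
    [IsProbabilityMeasure (ℙ : Measure Ω)] (β : ℂ) (C₀ p : ℝ)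
    (hC₀ : 0 < C₀) (hp : 1 / 2 ≤ p) (Z : ℕ → Ω → ℂ)
    (hmem : ∀ j : ℕ, 1 ≤ j → MemLp (Z j) 2 ℙ)
    (hmean : ∀ j : ℕ, 1 ≤ j → ∫ ω, Z j ω ∂ℙ = β)
    (hvar : ∀ j : ℕ, 1 ≤ j → ∫ ω, ‖Z j ω - β‖ ^ 2 ∂ℙ ≤ C₀)
    (hcov : ∀ j k : ℕ, 1 ≤ j → 1 ≤ k → j ≠ k →
      ‖∫ ω, (Z j ω - β) * star (Z k ω - β) ∂ℙ‖ ≤ C₀ * |(j : ℝ) - (k : ℝ)| ^ (-p)) :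
    ∀ᵐ ω ∂ℙ, Tendsto
      (fun N : ℕ => ((N : ℂ) ^ 3)⁻¹ * ∑ j ∈ Finset.Icc 1 (N ^ 3), Z j ω)
      atTop (nhds β) := by
  classical
  set W : ℕ → Ω → ℂ := fun j ω => Z j ω - β with hWdef
  have hW : ∀ j, 1 ≤ j → MemLp (W j) 2 (ℙ : Measure Ω) :=
    fun j hj => (hmem j hj).sub (memLp_const β)
  -- diagonal bound
  have hdiag : ∀ j, 1 ≤ j → ‖∫ ω, W j ω * star (W j ω) ∂ℙ‖ ≤ C₀ := by
    intro j hj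
    have h1 : ∀ ω, W j ω * star (W j ω) = ((‖W j ω‖^2 : ℝ) : ℂ) := by
      intro ω
      rw [show (star (W j ω)) = (starRingEnd ℂ) (W j ω) from rfl, Complex.mul_conj']
      norm_cast
    simp_rw [h1]
    rw [show (∫ ω, ((‖W j ω‖^2 : ℝ) : ℂ) ∂ℙ) = ((∫ ω, ‖W j ω‖^2 ∂ℙ : ℝ) : ℂ) from
      integral_ofReal]
    have h2 : (0:ℝ) ≤ ∫ ω, ‖W j ω‖^2 ∂ℙ := integral_nonneg (fun ω => by positivity)
    rw [Complex.norm_real, Real.norm_eq_abs, abs_of_nonneg h2]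
    exact hvar j hj
  -- off-diagonal bound
  have hoff : ∀ j k, 1 ≤ j → 1 ≤ k → j ≠ k →
      ‖∫ ω, W j ω * star (W k ω) ∂ℙ‖ ≤ C₀ * |(j:ℝ)-(k:ℝ)| ^ (-(1/2):ℝ) := by
    intro j k hj hk hjk
    refine (hcov j k hj hk hjk).trans ?_
    apply mul_le_mul_of_nonneg_left _ hC₀.le
    have habs : (1:ℝ) ≤ |(j:ℝ) - (k:ℝ)| := by
      rcases Nat.lt_or_ge j k with h | h
      · rw [abs_sub_comm, abs_of_nonneg (by
          have : (j:ℝ) < (k:ℝ) := by exact_mod_cast h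
          linarith)]
        have : (j:ℝ) + 1 ≤ (k:ℝ) := by exact_mod_cast h
        linarith
      · have hkj : k < j := by omega
        rw [abs_of_nonneg (by
          have : (k:ℝ) < (j:ℝ) := by exact_mod_cast hkj
          linarith)]
        have : (k:ℝ) + 1 ≤ (j:ℝ) := by exact_mod_cast hkj
        linarith
    exact Real.rpow_le_rpow_of_exponent_le habs (by linarith)
  -- the normalized sums
  set F : ℕ → Ω → ℂ := fun M ω => ((M:ℂ)^3)⁻¹ * ∑ j ∈ Finset.Icc 1 (M^3), W j ω with hFdef
  have hFmeas : ∀ M, AEStronglyMeasurable (F M) (ℙ : Measure Ω) := by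
    intro M
    apply AEStronglyMeasurable.const_mul
    apply Finset.aestronglyMeasurable_fun_sum
    intro j hj
    exact (hW j (Finset.mem_Icc.1 hj).1).1
  set g : ℕ → Ω → ℝ≥0∞ := fun M ω => ((‖F M ω‖₊ : ℝ≥0∞))^2 with hgdef
  have hgmeas : ∀ M, AEMeasurable (g M) (ℙ : Measure Ω) :=
    fun M => ((hFmeas M).enorm).pow_const 2
  -- the bound
  have hbound : ∀ M : ℕ, ∫⁻ ω, g M ω ∂ℙ ≤ ENNReal.ofReal (5 * C₀ / Real.sqrt ((M:ℝ)^3)) := by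
    intro M
    rcases Nat.eq_zero_or_pos M with rfl | hM
    · have : ∀ ω : Ω, g 0 ω = 0 := by
        intro ω; simp [hgdef, hFdef]
      simp [this]
    -- M ≥ 1
    have hFmem : MemLp (F M) 2 (ℙ : Measure Ω) := by
      have h := memLp_finset_sum' (Finset.Icc 1 (M^3))
        (fun j hj => hW j (Finset.mem_Icc.1 hj).1)
      have h2 : MemLp (fun ω => ∑ j ∈ Finset.Icc 1 (M^3), W j ω) 2 (ℙ : Measure Ω) := by
        have he : (∑ i ∈ Finset.Icc 1 (M^3), W i) = fun ω => ∑ j ∈ Finset.Icc 1 (M^3), W j ω := by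
          funext ω; simp [Finset.sum_apply]
        rwa [he] at h
      exact h2.const_mul _
    have hintsq : Integrable (fun ω => ‖F M ω‖^2) (ℙ : Measure Ω) :=
      hFmem.norm.integrable_sq
    have heq : ∫⁻ ω, g M ω ∂ℙ = ENNReal.ofReal (∫ ω, ‖F M ω‖^2 ∂ℙ) := by
      rw [ofReal_integral_eq_lintegral_ofReal hintsq
        (Filter.Eventually.of_forall fun ω => by positivity)]
      apply lintegral_congr
      intro ω
      rw [hgdef, ENNReal.ofReal_pow (norm_nonneg _), ofReal_norm, enorm_eq_nnnorm]
    rw [heq]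
    apply ENNReal.ofReal_le_ofReal
    -- compute the integral
    have hnorm : ∀ ω, ‖F M ω‖^2 = (((M:ℝ)^3)⁻¹)^2 * ‖∑ j ∈ Finset.Icc 1 (M^3), W j ω‖^2 := by
      intro ω
      rw [hFdef]
      simp only [norm_mul, norm_inv, norm_pow, Complex.norm_natCast, mul_pow, inv_pow]
    simp_rw [hnorm]
    rw [integral_const_mul]
    have hvarsum := variance_sum_le' (M^3) C₀ hC₀.le W hW hdiag hoff
    -- final real arithmetic
    set x : ℝ := (M:ℝ)^3 with hx
    have hx1 : (1:ℝ) ≤ x := one_le_pow₀ (by exact_mod_cast hM)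
    have hxcast : ((M^3 : ℕ) : ℝ) = x := by push_cast; rw [hx]
    set s := Real.sqrt x with hs
    have hs1 : 1 ≤ s := Real.one_le_sqrt.2 hx1
    have hs2 : s^2 = x := Real.sq_sqrt (by linarith)
    have hspos : (0:ℝ) < s := by linarith
    rw [hxcast] at hvarsum
    have h2 : (x⁻¹)^2 * (∫ ω, ‖∑ j ∈ Finset.Icc 1 (M^3), W j ω‖^2 ∂ℙ)
        ≤ (x⁻¹)^2 * (C₀ * x + 4 * C₀ * x * s) := by
      apply mul_le_mul_of_nonneg_left _ (by positivity)
      linarith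
    refine h2.trans ?_
    rw [← hs2, div_eq_mul_inv, ← sub_nonneg]
    have hkey : 5 * C₀ * s⁻¹ - ((s^2)⁻¹)^2 * (C₀ * s^2 + 4 * C₀ * s^2 * s)
        = C₀ * (s - 1) / s^2 := by
      field_simp
      ring
    rw [hkey]
    exact div_nonneg (by nlinarith) (by positivity)
  -- summability
  have hsummable : Summable (fun M : ℕ => 5 * C₀ / Real.sqrt ((M:ℝ)^3)) := by
    have h1 : Summable (fun M : ℕ => 1 / (M:ℝ) ^ ((3:ℝ)/2)) :=
      (Real.summable_one_div_nat_rpow).2 (by norm_num)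
    have h2 := h1.mul_left (5 * C₀)
    apply h2.congr
    intro M
    have hsq : Real.sqrt ((M:ℝ)^3) = (M:ℝ)^((3:ℝ)/2) := by
      rw [Real.sqrt_eq_rpow, ← Real.rpow_natCast (M:ℝ) 3,
        ← Real.rpow_mul (Nat.cast_nonneg M)]
      norm_num
    rw [hsq]
    ring
  have htsum_lt : ∑' M, ∫⁻ ω, g M ω ∂ℙ < ⊤ := by
    calc ∑' M, ∫⁻ ω, g M ω ∂ℙ
        ≤ ∑' M : ℕ, ENNReal.ofReal (5 * C₀ / Real.sqrt ((M:ℝ)^3)) :=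
          ENNReal.tsum_le_tsum hbound
      _ = ENNReal.ofReal (∑' M : ℕ, 5 * C₀ / Real.sqrt ((M:ℝ)^3)) := by
          rw [ENNReal.ofReal_tsum_of_nonneg (fun M => by positivity) hsummable]
      _ < ⊤ := ENNReal.ofReal_lt_top
  -- a.e. finiteness of the tsum
  have h_ae : ∀ᵐ ω ∂(ℙ : Measure Ω), ∑' M, g M ω ≠ ⊤ := by
    have hl : ∫⁻ ω, ∑' M, g M ω ∂ℙ < ⊤ := by
      rw [lintegral_tsum hgmeas]
      exact htsum_lt
    filter_upwards [ae_lt_top' (AEMeasurable.ennreal_tsum hgmeas) hl.ne] with ω hω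
    exact hω.ne
  filter_upwards [h_ae] with ω hω
  -- convergence of g, then F, then the averages
  have h0 : Tendsto (fun M => g M ω) atTop (nhds 0) :=
    ENNReal.tendsto_atTop_zero_of_tsum_ne_top hω
  have h1 : Tendsto (fun M => (g M ω).toReal) atTop (nhds 0) := by
    have := (ENNReal.tendsto_toReal (by simp : (0:ℝ≥0∞) ≠ ⊤)).comp h0
    exact this
  have h2 : Tendsto (fun M => ‖F M ω‖^2) atTop (nhds 0) := by
    apply h1.congr
    intro M
    rw [hgdef]
    simp [ENNReal.toReal_pow]
  have h3 : Tendsto (fun M => ‖F M ω‖) atTop (nhds 0) := by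
    have := h2.sqrt
    simpa [Real.sqrt_sq (norm_nonneg _)] using this
  have h4 : Tendsto (fun M => F M ω) atTop (nhds 0) :=
    tendsto_zero_iff_norm_tendsto_zero.2 h3
  have h5 : Tendsto (fun M => F M ω + β) atTop (nhds β) := by
    simpa using h4.add_const β
  apply h5.congr'
  filter_upwards [eventually_ge_atTop 1] with M hM
  have hc : ((M:ℂ)^3) ≠ 0 := pow_ne_zero _ (Nat.cast_ne_zero.2 (by omega))
  have hsum : ∑ j ∈ Finset.Icc 1 (M^3), Z j ω
      = ∑ j ∈ Finset.Icc 1 (M^3), W j ω + (M:ℂ)^3 * β := by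
    simp_rw [hWdef]
    rw [Finset.sum_sub_distrib, Finset.sum_const, Nat.card_Icc, Nat.add_sub_cancel,
      nsmul_eq_mul, Nat.cast_pow]
    ring
  rw [hsum, mul_add, ← mul_assoc, inv_mul_cancel₀ hc, one_mul]
end
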